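/- If G is a complete multipartite graph that is neither a complete graph nor a tree, then tpc(G) = 3. -/

import Mathlib

open SimpleGraph

variable {V : Type*} {α : Type*}

/-- A walk in a total-colored graph (vertex coloring `cv`, edge coloring `ce`) is a
*total proper* walk if (i) any two adjacent edges on it differ in color, (ii) any two
internal adjacent vertices on it differ in color, and (iii) any internal vertex differs
in color from its incident edges on the walk. -/
def IsTotalProperWalk {G : SimpleGraph V} (cv : V → α) (ce : Sym2 V → α)
    {u v : V} (w : G.Walk u v) : Prop :=
  (∀ i : ℕ, i + 1 < w.length →
      ce (w.edges.getD i s(u, u)) ≠ ce (w.edges.getD (i + 1) s(u, u))) ∧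
  (∀ i : ℕ, 1 ≤ i → i + 1 < w.length →
      cv (w.support.getD i u) ≠ cv (w.support.getD (i + 1) u)) ∧
  (∀ i : ℕ, 1 ≤ i → i < w.length →
      cv (w.support.getD i u) ≠ ce (w.edges.getD (i - 1) s(u, u)) ∧
      cv (w.support.getD i u) ≠ ce (w.edges.getD i s(u, u)))

/-- A total-colored graph is total proper connected if any two vertices are joined by a
total proper path. -/
def TotalProperConnected (G : SimpleGraph V) (cv : V → α) (ce : Sym2 V → α) : Prop :=
  ∀ u v : V, ∃ w : G.Walk u v, w.IsPath ∧ IsTotalProperWalk cv ce w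

/-- The total proper connection number: the smallest number of colors in a total coloring
making the graph total proper connected. -/
noncomputable def tpc (G : SimpleGraph V) : ℕ :=
  sInf {k | ∃ (cv : V → Fin k) (ce : Sym2 V → Fin k), TotalProperConnected G cv ce}

lemma tpw_nil {G : SimpleGraph V} (cv : V → α) (ce : Sym2 V → α) (u : V) :
    IsTotalProperWalk cv ce (Walk.nil : G.Walk u u) := by
  refine ⟨fun i hi => ?_, fun i h1 h2 => ?_, fun i h1 h2 => ?_⟩ <;>
    simp [Walk.length_nil] at *

lemma tpw_one {G : SimpleGraph V} (cv : V → α) (ce : Sym2 V → α) {u v : V} (h : G.Adj u v) :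
    IsTotalProperWalk cv ce (Walk.cons h Walk.nil) := by
  refine ⟨fun i hi => ?_, fun i h1 h2 => ?_, fun i h1 h2 => ?_⟩ <;>
    simp [Walk.length_cons] at * <;> omega

lemma tpw_two {G : SimpleGraph V} (cv : V → α) (ce : Sym2 V → α) {u x v : V}
    (h1 : G.Adj u x) (h2 : G.Adj x v)
    (he : ce s(u, x) ≠ ce s(x, v)) (hv1 : cv x ≠ ce s(u, x)) (hv2 : cv x ≠ ce s(x, v)) :
    IsTotalProperWalk cv ce (Walk.cons h1 (Walk.cons h2 Walk.nil)) := by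
  refine ⟨fun i hi => ?_, fun i ha hb => ?_, fun i ha hb => ?_⟩
  · simp only [Walk.length_cons, Walk.length_nil] at hi
    rcases i with _ | i
    · simpa using he
    · omega
  · simp only [Walk.length_cons, Walk.length_nil] at hb; omega
  · simp only [Walk.length_cons, Walk.length_nil] at hb
    rcases i with _ | _ | i
    · omega
    · simpa using ⟨hv1, hv2⟩
    · omega

lemma tpw_four {G : SimpleGraph V} (cv : V → α) (ce : Sym2 V → α) {u x y z v : V}
    (h1 : G.Adj u x) (h2 : G.Adj x y) (h3 : G.Adj y z) (h4 : G.Adj z v)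
    (e12 : ce s(u, x) ≠ ce s(x, y)) (e23 : ce s(x, y) ≠ ce s(y, z))
    (e34 : ce s(y, z) ≠ ce s(z, v))
    (v12 : cv x ≠ cv y) (v23 : cv y ≠ cv z)
    (x1 : cv x ≠ ce s(u, x)) (x2 : cv x ≠ ce s(x, y))
    (y1 : cv y ≠ ce s(x, y)) (y2 : cv y ≠ ce s(y, z))
    (z1 : cv z ≠ ce s(y, z)) (z2 : cv z ≠ ce s(z, v)) :
    IsTotalProperWalk cv ce
      (Walk.cons h1 (Walk.cons h2 (Walk.cons h3 (Walk.cons h4 Walk.nil)))) := by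
  refine ⟨fun i hi => ?_, fun i ha hb => ?_, fun i ha hb => ?_⟩
  · simp only [Walk.length_cons, Walk.length_nil] at hi
    rcases i with _ | _ | _ | i
    · simpa using e12
    · simpa using e23
    · simpa using e34
    · omega
  · simp only [Walk.length_cons, Walk.length_nil] at hb
    rcases i with _ | _ | _ | i
    · omega
    · simpa using v12
    · simpa using v23
    · omega
  · simp only [Walk.length_cons, Walk.length_nil] at hb
    rcases i with _ | _ | _ | _ | i
    · omega
    · simpa using ⟨x1, x2⟩
    · simpa using ⟨y1, y2⟩
    · simpa using ⟨z1, z2⟩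
    · omega

lemma path_one {G : SimpleGraph V} {u v : V} (h : G.Adj u v) :
    (Walk.cons h Walk.nil).IsPath := by
  simp [Walk.isPath_def, h.ne]

lemma path_two {G : SimpleGraph V} {u x v : V}
    (h1 : G.Adj u x) (h2 : G.Adj x v) (huv : u ≠ v) :
    (Walk.cons h1 (Walk.cons h2 Walk.nil)).IsPath := by
  simp [Walk.isPath_def, h1.ne, h2.ne, huv]

lemma path_four {G : SimpleGraph V} {u x y z v : V}
    (h1 : G.Adj u x) (h2 : G.Adj x y) (h3 : G.Adj y z) (h4 : G.Adj z v)
    (huy : u ≠ y) (huz : u ≠ z) (huv : u ≠ v) (hxz : x ≠ z) (hxv : x ≠ v) (hyv : y ≠ v) :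
    (Walk.cons h1 (Walk.cons h2 (Walk.cons h3 (Walk.cons h4 Walk.nil)))).IsPath := by
  simp [Walk.isPath_def, h1.ne, h2.ne, h3.ne, h4.ne, huy, huz, huv, hxz, hxv, hyv]

lemma construction {ι : Type*} (f : ι → Type*) (a1 a2 b1 b2 : Σ i, f i)
    (ha2 : a2.1 = a1.1) (h12 : a1 ≠ a2)
    (hb1 : b1.1 ≠ a1.1) (hb2 : b2.1 ≠ a1.1) (hbb : b1 ≠ b2) :
    ∃ (cv : (Σ i, f i) → Fin 3) (ce : Sym2 (Σ i, f i) → Fin 3),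
      TotalProperConnected (completeMultipartiteGraph f) cv ce := by
  classical
  set G := completeMultipartiteGraph f with hGdef
  have hadj : ∀ x y : Σ i, f i, x.1 ≠ y.1 → G.Adj x y := fun _ _ h => h
  -- basic ne facts
  have hab1 : a1 ≠ b1 := fun e => hb1 (by rw [← e])
  have hab2 : a1 ≠ b2 := fun e => hb2 (by rw [← e])
  have ha2b1 : a2 ≠ b1 := fun e => hb1 (by rw [← e, ha2])
  have ha2b2 : a2 ≠ b2 := fun e => hb2 (by rw [← e, ha2])
  have neAB : ∀ p q : Σ i, f i, p.1 = a1.1 → q.1 ≠ a1.1 → p ≠ q :=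
    fun p q hp hq e => hq (by rw [← e]; exact hp)
  -- colorings
  set cv : (Σ i, f i) → Fin 3 :=
    (fun x => if x = a1 then 1 else if x.1 = a1.1 ∨ x = b2 then 2 else 0) with hcv
  have hsym : ∀ x y : Σ i, f i,
      (if x = a1 ∨ y = a1 then (if x = b1 ∨ y = b1 then (2 : Fin 3) else 0)
       else if x = b1 ∨ y = b1 ∨ x = b2 ∨ y = b2 then 1 else 0) =
      (if y = a1 ∨ x = a1 then (if y = b1 ∨ x = b1 then (2 : Fin 3) else 0)
       else if y = b1 ∨ x = b1 ∨ y = b2 ∨ x = b2 then 1 else 0) := by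
    intro x y
    exact if_congr or_comm (if_congr or_comm rfl rfl)
      (if_congr (by tauto) rfl rfl)
  set ce : Sym2 (Σ i, f i) → Fin 3 :=
    Sym2.lift ⟨fun x y =>
      if x = a1 ∨ y = a1 then (if x = b1 ∨ y = b1 then (2 : Fin 3) else 0)
      else if x = b1 ∨ y = b1 ∨ x = b2 ∨ y = b2 then 1 else 0, hsym⟩ with hce
  have ceval : ∀ x y : Σ i, f i, ce s(x, y) =
      if x = a1 ∨ y = a1 then (if x = b1 ∨ y = b1 then (2 : Fin 3) else 0)
      else if x = b1 ∨ y = b1 ∨ x = b2 ∨ y = b2 then 1 else 0 := fun x y => rfl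
  -- edge color evaluation
  have cA1 : ∀ y : Σ i, f i, ce s(a1, y) = if y = b1 then 2 else 0 := by
    intro y; rw [ceval]; simp [hab1]
  have cGen : ∀ x y : Σ i, f i, x ≠ a1 → y ≠ a1 →
      ce s(x, y) = if x = b1 ∨ y = b1 ∨ x = b2 ∨ y = b2 then 1 else 0 := by
    intro x y hx hy; rw [ceval]; simp [hx, hy]
  -- vertex color evaluation
  have cva1 : cv a1 = 1 := by simp [hcv]
  have cva2 : cv a2 = 2 := by simp [hcv, h12.symm, ha2]
  have cvb1 : cv b1 = 0 := by simp [hcv, hab1.symm, hb1, hbb]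
  have cvb2 : cv b2 = 2 := by simp [hcv, hab2.symm]
  -- adjacency helpers
  have adjb1 : ∀ w : Σ i, f i, w.1 = a1.1 → G.Adj w b1 :=
    fun w h => hadj w b1 (by rw [h]; exact fun e => hb1 e.symm)
  have adjb2 : ∀ w : Σ i, f i, w.1 = a1.1 → G.Adj w b2 :=
    fun w h => hadj w b2 (by rw [h]; exact fun e => hb2 e.symm)
  have adjB1 : ∀ w : Σ i, f i, w.1 ≠ a1.1 → G.Adj a1 w :=
    fun w h => hadj a1 w (fun e => h e.symm)
  have adjB2 : ∀ w : Σ i, f i, w.1 ≠ a1.1 → G.Adj a2 w :=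
    fun w h => hadj a2 w (fun e => h (e.symm.trans ha2))
  refine ⟨cv, ce, ?_⟩
  intro u v
  by_cases huv : u = v
  · subst huv
    exact ⟨Walk.nil, Walk.IsPath.nil, tpw_nil cv ce u⟩
  by_cases hfst : u.1 = v.1
  swap
  · exact ⟨Walk.cons (hadj u v hfst) Walk.nil, path_one _, tpw_one cv ce _⟩
  by_cases hu0 : u.1 = a1.1
  · -- both ends in part A
    have hv0 : v.1 = a1.1 := by rw [← hfst]; exact hu0
    have h1 : G.Adj u b1 := adjb1 u hu0
    by_cases hua : u = a1
    · -- walk u(=a1) - b1 - v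
      have hva : v ≠ a1 := fun e => huv (hua.trans e.symm)
      have h2 : G.Adj b1 v := (adjb1 v hv0).symm
      have E1 : ce s(u, b1) = 2 := by rw [hua, cA1]; simp
      have E2 : ce s(b1, v) = 1 := by rw [cGen b1 v hab1.symm hva]; simp
      exact ⟨Walk.cons h1 (Walk.cons h2 Walk.nil), path_two h1 h2 huv,
        tpw_two cv ce h1 h2 (by rw [E1, E2]; decide) (by rw [cvb1, E1]; decide)
          (by rw [cvb1, E2]; decide)⟩
    by_cases hva : v = a1
    · -- walk u - b1 - v(=a1)
      have h2 : G.Adj b1 v := (adjb1 v hv0).symm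
      have E1 : ce s(u, b1) = 1 := by rw [cGen u b1 hua hab1.symm]; simp
      have E2 : ce s(b1, v) = 2 := by rw [Sym2.eq_swap, hva, cA1]; simp
      exact ⟨Walk.cons h1 (Walk.cons h2 Walk.nil), path_two h1 h2 huv,
        tpw_two cv ce h1 h2 (by rw [E1, E2]; decide) (by rw [cvb1, E1]; decide)
          (by rw [cvb1, E2]; decide)⟩
    · -- walk u - b1 - a1 - b2 - v
      have h2 : G.Adj b1 a1 := (adjB1 b1 hb1).symm
      have h3 : G.Adj a1 b2 := adjB1 b2 hb2
      have h4 : G.Adj b2 v := (adjb2 v hv0).symm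
      have E1 : ce s(u, b1) = 1 := by rw [cGen u b1 hua hab1.symm]; simp
      have E2 : ce s(b1, a1) = 2 := by rw [Sym2.eq_swap, cA1]; simp
      have E3 : ce s(a1, b2) = 0 := by rw [cA1]; simp [Ne.symm hbb]
      have E4 : ce s(b2, v) = 1 := by rw [cGen b2 v hab2.symm hva]; simp
      exact ⟨Walk.cons h1 (Walk.cons h2 (Walk.cons h3 (Walk.cons h4 Walk.nil))),
        path_four h1 h2 h3 h4 hua (neAB u b2 hu0 hb2) huv hbb
          (Ne.symm (neAB v b1 hv0 hb1)) (Ne.symm hva),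
        tpw_four cv ce h1 h2 h3 h4
          (by rw [E1, E2]; decide) (by rw [E2, E3]; decide) (by rw [E3, E4]; decide)
          (by rw [cvb1, cva1]; decide) (by rw [cva1, cvb2]; decide)
          (by rw [cvb1, E1]; decide) (by rw [cvb1, E2]; decide)
          (by rw [cva1, E2]; decide) (by rw [cva1, E3]; decide)
          (by rw [cvb2, E3]; decide) (by rw [cvb2, E4]; decide)⟩
  · -- both ends outside part A
    have hv0 : v.1 ≠ a1.1 := by rw [← hfst]; exact hu0
    have hua : u ≠ a1 := Ne.symm (neAB a1 u rfl hu0)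
    have hva : v ≠ a1 := Ne.symm (neAB a1 v rfl hv0)
    have hua2 : u ≠ a2 := Ne.symm (neAB a2 u ha2 hu0)
    have hva2 : v ≠ a2 := Ne.symm (neAB a2 v ha2 hv0)
    by_cases hub1 : u = b1
    · have hvb1 : v ≠ b1 := fun e => huv (hub1.trans e.symm)
      by_cases hvb2 : v = b2
      · -- walk u(=b1) - a1 - v(=b2)
        have h1 : G.Adj u a1 := (adjB1 u hu0).symm
        have h2 : G.Adj a1 v := adjB1 v hv0
        have E1 : ce s(u, a1) = 2 := by rw [Sym2.eq_swap, cA1]; simp [hub1]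
        have E2 : ce s(a1, v) = 0 := by rw [cA1]; simp [hvb1]
        exact ⟨Walk.cons h1 (Walk.cons h2 Walk.nil), path_two h1 h2 huv,
          tpw_two cv ce h1 h2 (by rw [E1, E2]; decide) (by rw [cva1, E1]; decide)
            (by rw [cva1, E2]; decide)⟩
      · -- walk u(=b1) - a2 - v
        have h1 : G.Adj u a2 := (adjB2 u hu0).symm
        have h2 : G.Adj a2 v := adjB2 v hv0
        have E1 : ce s(u, a2) = 1 := by rw [cGen u a2 hua h12.symm]; simp [hub1]
        have E2 : ce s(a2, v) = 0 := by
          rw [cGen a2 v h12.symm hva]; simp [ha2b1, ha2b2, hvb1, hvb2]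
        exact ⟨Walk.cons h1 (Walk.cons h2 Walk.nil), path_two h1 h2 huv,
          tpw_two cv ce h1 h2 (by rw [E1, E2]; decide) (by rw [cva2, E1]; decide)
            (by rw [cva2, E2]; decide)⟩
    by_cases hvb1 : v = b1
    · have hub1' : u ≠ b1 := hub1
      by_cases hub2 : u = b2
      · -- walk u(=b2) - a1 - v(=b1)
        have h1 : G.Adj u a1 := (adjB1 u hu0).symm
        have h2 : G.Adj a1 v := adjB1 v hv0
        have E1 : ce s(u, a1) = 0 := by rw [Sym2.eq_swap, cA1]; simp [hub1]
        have E2 : ce s(a1, v) = 2 := by rw [cA1]; simp [hvb1]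
        exact ⟨Walk.cons h1 (Walk.cons h2 Walk.nil), path_two h1 h2 huv,
          tpw_two cv ce h1 h2 (by rw [E1, E2]; decide) (by rw [cva1, E1]; decide)
            (by rw [cva1, E2]; decide)⟩
      · -- walk u - a2 - v(=b1)
        have h1 : G.Adj u a2 := (adjB2 u hu0).symm
        have h2 : G.Adj a2 v := adjB2 v hv0
        have E1 : ce s(u, a2) = 0 := by
          rw [cGen u a2 hua h12.symm]; simp [hub1, hub2, ha2b1, ha2b2]
        have E2 : ce s(a2, v) = 1 := by rw [cGen a2 v h12.symm hva]; simp [hvb1]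
        exact ⟨Walk.cons h1 (Walk.cons h2 Walk.nil), path_two h1 h2 huv,
          tpw_two cv ce h1 h2 (by rw [E1, E2]; decide) (by rw [cva2, E1]; decide)
            (by rw [cva2, E2]; decide)⟩
    by_cases hub2 : u = b2
    · -- walk u(=b2) - a2 - v
      have hvb2 : v ≠ b2 := fun e => huv (hub2.trans e.symm)
      have h1 : G.Adj u a2 := (adjB2 u hu0).symm
      have h2 : G.Adj a2 v := adjB2 v hv0
      have E1 : ce s(u, a2) = 1 := by rw [cGen u a2 hua h12.symm]; simp [hub2]
      have E2 : ce s(a2, v) = 0 := by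
        rw [cGen a2 v h12.symm hva]; simp [ha2b1, ha2b2, hvb1, hvb2]
      exact ⟨Walk.cons h1 (Walk.cons h2 Walk.nil), path_two h1 h2 huv,
        tpw_two cv ce h1 h2 (by rw [E1, E2]; decide) (by rw [cva2, E1]; decide)
          (by rw [cva2, E2]; decide)⟩
    by_cases hvb2 : v = b2
    · -- walk u - a2 - v(=b2)
      have h1 : G.Adj u a2 := (adjB2 u hu0).symm
      have h2 : G.Adj a2 v := adjB2 v hv0
      have E1 : ce s(u, a2) = 0 := by
        rw [cGen u a2 hua h12.symm]; simp [hub1, hub2, ha2b1, ha2b2]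
      have E2 : ce s(a2, v) = 1 := by rw [cGen a2 v h12.symm hva]; simp [hvb2]
      exact ⟨Walk.cons h1 (Walk.cons h2 Walk.nil), path_two h1 h2 huv,
        tpw_two cv ce h1 h2 (by rw [E1, E2]; decide) (by rw [cva2, E1]; decide)
          (by rw [cva2, E2]; decide)⟩
    · -- walk u - a1 - b1 - a2 - v
      have h1 : G.Adj u a1 := (adjB1 u hu0).symm
      have h2 : G.Adj a1 b1 := adjB1 b1 hb1
      have h3 : G.Adj b1 a2 := (adjB2 b1 hb1).symm
      have h4 : G.Adj a2 v := adjB2 v hv0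
      have E1 : ce s(u, a1) = 0 := by rw [Sym2.eq_swap, cA1]; simp [hub1]
      have E2 : ce s(a1, b1) = 2 := by rw [cA1]; simp
      have E3 : ce s(b1, a2) = 1 := by rw [cGen b1 a2 hab1.symm h12.symm]; simp
      have E4 : ce s(a2, v) = 0 := by
        rw [cGen a2 v h12.symm hva]; simp [ha2b1, ha2b2, hvb1, hvb2]
      exact ⟨Walk.cons h1 (Walk.cons h2 (Walk.cons h3 (Walk.cons h4 Walk.nil))),
        path_four h1 h2 h3 h4 hub1 hua2 huv h12 (Ne.symm hva) (Ne.symm hvb1),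
        tpw_four cv ce h1 h2 h3 h4
          (by rw [E1, E2]; decide) (by rw [E2, E3]; decide) (by rw [E3, E4]; decide)
          (by rw [cva1, cvb1]; decide) (by rw [cvb1, cva2]; decide)
          (by rw [cva1, E1]; decide) (by rw [cva1, E2]; decide)
          (by rw [cvb1, E2]; decide) (by rw [cvb1, E3]; decide)
          (by rw [cva2, E3]; decide) (by rw [cva2, E4]; decide)⟩

lemma star_acyclic {G : SimpleGraph V} {x : V}
    (hedge : ∀ p q : V, G.Adj p q → p = x ∨ q = x) : G.IsAcyclic := by
  classical
  intro v c hc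
  -- x is in the support of c
  have hx_mem : x ∈ c.support := by
    cases c with
    | nil => exact absurd rfl hc.ne_nil
    | cons h p =>
      rcases hedge _ _ h with h1 | h1
      · exact h1 ▸ Walk.start_mem_support _
      · rw [Walk.support_cons]
        exact List.mem_cons_of_mem _ (h1 ▸ Walk.start_mem_support p)
  have hc' := hc.rotate hx_mem
  set c' := c.rotate x hx_mem with hc'def
  clear_value c'
  clear hc'def hc hx_mem
  cases c' with
  | nil => exact absurd rfl hc'.ne_nil
  | cons h p =>
    rename_i y
    cases p with
    | nil => exact h.ne rfl
    | cons h2 p2 =>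
      rename_i z
      have hz : z = x := by
        rcases hedge _ _ h2 with e | e
        · exact absurd e h.ne'
        · exact e
      subst hz
      cases p2 with
      | nil =>
        have := hc'.three_le_length
        simp [Walk.length_cons] at this
      | cons h3 p3 =>
        have hnd := hc'.support_nodup
        simp only [Walk.support_cons, List.tail_cons, List.nodup_cons] at hnd
        exact hnd.2.1 (Walk.end_mem_support p3)

/-- If `G` is a complete multipartite graph that is neither a complete graph nor a tree,
then `tpc G = 3`. -/
theorem stmt_9 {ι : Type*} [Fintype ι] (f : ι → Type*) [∀ i, Fintype (f i)]
    (hconn : (completeMultipartiteGraph f).Connected)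
    (hnc : completeMultipartiteGraph f ≠ (⊤ : SimpleGraph (Σ i, f i)))
    (hnt : ¬ (completeMultipartiteGraph f).IsTree) :
    tpc (completeMultipartiteGraph f) = 3 := by
  classical
  have hne : ¬ ((⊤ : SimpleGraph (Σ i, f i)) ≤ completeMultipartiteGraph f) :=
    fun h => hnc (le_antisymm le_top h)
  have hne' : ¬ ∀ ⦃a b : Σ i, f i⦄, (⊤ : SimpleGraph (Σ i, f i)).Adj a b →
      (completeMultipartiteGraph f).Adj a b := hne
  push_neg at hne'
  obtain ⟨a, b, hab, hnadj⟩ := hne'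
  have hab' : a ≠ b := by simpa using hab
  have habf : a.1 = b.1 := by by_contra h; exact hnadj h
  -- there is a vertex outside the part of `a`
  have hBne : ∃ x : Σ i, f i, x.1 ≠ a.1 := by
    by_contra h
    push_neg at h
    obtain ⟨w⟩ := hconn.preconnected a b
    cases w with
    | nil => exact hab' rfl
    | cons hadj p =>
      rename_i y
      exact hadj (h y).symm
  obtain ⟨x0, hx0⟩ := hBne
  -- there are two distinct vertices outside the part of `a`
  have hB2 : ∃ y : Σ i, f i, y.1 ≠ a.1 ∧ y ≠ x0 := by
    by_contra h
    push_neg at h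
    have hedge : ∀ p q : Σ i, f i, (completeMultipartiteGraph f).Adj p q →
        p = x0 ∨ q = x0 := by
      intro p q hpq
      have hpq' : p.1 ≠ q.1 := hpq
      by_cases hp : p.1 = a.1
      · right; exact h q (fun e => hpq' (hp.trans e.symm))
      · left; exact h p hp
    exact hnt ⟨hconn, star_acyclic hedge⟩
  obtain ⟨y0, hy0, hyx⟩ := hB2
  have hmem : 3 ∈ {k | ∃ (cv : (Σ i, f i) → Fin k) (ce : Sym2 (Σ i, f i) → Fin k),
      TotalProperConnected (completeMultipartiteGraph f) cv ce} := by
    obtain ⟨cv, ce, h⟩ := construction f a b x0 y0 habf.symm hab' hx0 hy0 (Ne.symm hyx)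
    exact ⟨cv, ce, h⟩
  have hlow : ∀ m ∈ {k | ∃ (cv : (Σ i, f i) → Fin k) (ce : Sym2 (Σ i, f i) → Fin k),
      TotalProperConnected (completeMultipartiteGraph f) cv ce}, 3 ≤ m := by
    intro m hm
    by_contra hlt
    push_neg at hlt
    obtain ⟨cv, ce, htpc⟩ := hm
    obtain ⟨w, hpath, hprop⟩ := htpc a b
    cases w with
    | nil => exact hab' rfl
    | cons h1 p =>
      rename_i y
      cases p with
      | nil => exact hnadj h1
      | cons h2 p2 =>
        rename_i z
        have hlen : 1 < (Walk.cons h1 (Walk.cons h2 p2)).length := by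
          simp [Walk.length_cons]
        have c1 := hprop.1 0 hlen
        have c3 := hprop.2.2 1 le_rfl hlen
        simp only [Walk.edges_cons, Walk.support_cons, List.getD_cons_zero,
          List.getD_cons_succ, Nat.sub_self] at c1 c3
        have hA : ce s(a, y) ∉ ({ce s(y, z), cv y} : Finset (Fin m)) := by
          simp only [Finset.mem_insert, Finset.mem_singleton]
          push_neg
          exact ⟨c1, fun e => c3.1 e.symm⟩
        have hB : ce s(y, z) ∉ ({cv y} : Finset (Fin m)) := by
          simp only [Finset.mem_singleton]
          exact fun e => c3.2 e.symm
        have hcard : ({ce s(a, y), ce s(y, z), cv y} : Finset (Fin m)).card = 3 := by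
          rw [Finset.card_insert_of_notMem hA, Finset.card_insert_of_notMem hB,
            Finset.card_singleton]
        have hle : ({ce s(a, y), ce s(y, z), cv y} : Finset (Fin m)).card ≤ m := by
          simpa using Finset.card_le_univ ({ce s(a, y), ce s(y, z), cv y} : Finset (Fin m))
        omega
  exact le_antisymm (Nat.sInf_le hmem) (le_csInf ⟨3, hmem⟩ hlow)
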